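/- (i) For every real x with −1 < x ≤ 0, one has 2(1+x)² log(1+x) ≤ 2x + 3x². (ii) For every real x ≥ 0, one has 2(1+x) log(1+x) ≤ x² + 2x. -/

import Mathlib

open Real Set

lemma hasDerivAt_aux1 {y : ℝ} (hy : 0 < 1 + y) :
    HasDerivAt (fun x : ℝ => 2 * x + 3 * x ^ 2 - 2 * (1 + x) ^ 2 * Real.log (1 + x))
      (4 * y - 4 * (1 + y) * Real.log (1 + y)) y := by
  have h1 : HasDerivAt (fun x : ℝ => 1 + x) 1 y := (hasDerivAt_id y).const_add 1
  have hlog : HasDerivAt (fun x : ℝ => Real.log (1 + x)) (1 / (1 + y)) y :=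
    h1.log hy.ne'
  have hx2 : HasDerivAt (fun x : ℝ => 2 * x + 3 * x ^ 2) (2 * 1 + 3 * (2 * y ^ 1 * 1)) y :=
    ((hasDerivAt_id y).const_mul 2).add (((hasDerivAt_id y).pow 2).const_mul 3)
  have hmul := ((h1.pow 2).mul hlog).const_mul 2
  have hfinal := hx2.sub hmul
  have heq : (fun x : ℝ => 2 * x + 3 * x ^ 2 - 2 * (1 + x) ^ 2 * Real.log (1 + x))
      = fun x : ℝ => 2 * x + 3 * x ^ 2 - 2 * ((1 + x) ^ 2 * Real.log (1 + x)) := by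
    funext x; ring
  rw [heq]
  refine hfinal.congr_deriv ?_
  simp only [Pi.pow_apply]
  field_simp
  ring

lemma hasDerivAt_aux2 {y : ℝ} (hy : 0 < 1 + y) :
    HasDerivAt (fun x : ℝ => x ^ 2 + 2 * x - 2 * (1 + x) * Real.log (1 + x))
      (2 * y - 2 * Real.log (1 + y)) y := by
  have h1 : HasDerivAt (fun x : ℝ => 1 + x) 1 y := (hasDerivAt_id y).const_add 1
  have hlog : HasDerivAt (fun x : ℝ => Real.log (1 + x)) (1 / (1 + y)) y :=
    h1.log hy.ne'
  have hx2 : HasDerivAt (fun x : ℝ => x ^ 2 + 2 * x) (2 * y ^ 1 * 1 + 2 * 1) y :=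
    ((hasDerivAt_id y).pow 2).add ((hasDerivAt_id y).const_mul 2)
  have hmul := (h1.mul hlog).const_mul 2
  have hfinal := hx2.sub hmul
  have heq : (fun x : ℝ => x ^ 2 + 2 * x - 2 * (1 + x) * Real.log (1 + x))
      = fun x : ℝ => x ^ 2 + 2 * x - 2 * ((1 + x) * Real.log (1 + x)) := by
    funext x; ring
  rw [heq]
  refine hfinal.congr_deriv ?_
  field_simp
  ring

lemma contOn_aux (s : Set ℝ) (hs : ∀ x ∈ s, 0 < 1 + x) :
    ContinuousOn (fun x : ℝ => Real.log (1 + x)) s :=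
  ContinuousOn.log (by fun_prop) (fun x hx => (hs x hx).ne')

theorem stmt6 :
    (∀ x : ℝ, -1 < x → x ≤ 0 →
      2 * (1 + x) ^ 2 * Real.log (1 + x) ≤ 2 * x + 3 * x ^ 2) ∧
    (∀ x : ℝ, 0 ≤ x →
      2 * (1 + x) * Real.log (1 + x) ≤ x ^ 2 + 2 * x) := by
  constructor
  · intro x hx1 hx2
    set f : ℝ → ℝ := fun x => 2 * x + 3 * x ^ 2 - 2 * (1 + x) ^ 2 * Real.log (1 + x) with hf
    have hanti : AntitoneOn f (Set.Ioc (-1 : ℝ) 0) := by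
      apply antitoneOn_of_deriv_nonpos (convex_Ioc _ _)
      · apply ContinuousOn.sub (by fun_prop)
        exact ContinuousOn.mul (by fun_prop)
          (contOn_aux _ (fun x hx => by have := hx.1; linarith))
      · intro y hy
        rw [interior_Ioc] at hy
        have hy1 : 0 < 1 + y := by have := hy.1; linarith
        exact (hasDerivAt_aux1 hy1).differentiableAt.differentiableWithinAt
      · intro y hy
        rw [interior_Ioc] at hy
        have hy1 : 0 < 1 + y := by have := hy.1; linarith
        rw [(hasDerivAt_aux1 hy1).deriv]
        have hlb : 1 - (1 + y)⁻¹ ≤ Real.log (1 + y) := Real.one_sub_inv_le_log_of_pos hy1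
        have hkey : y ≤ (1 + y) * Real.log (1 + y) := by
          have h := mul_le_mul_of_nonneg_left hlb hy1.le
          have h2 : (1 + y) * (1 - (1 + y)⁻¹) = y := by field_simp; ring
          linarith
        linarith
    have h0 : (0 : ℝ) ∈ Set.Ioc (-1 : ℝ) 0 := by constructor <;> norm_num
    have hxm : x ∈ Set.Ioc (-1 : ℝ) 0 := ⟨hx1, hx2⟩
    have h := hanti hxm h0 hx2
    simp only [hf] at h
    norm_num at h
    linarith
  · intro x hx
    set f : ℝ → ℝ := fun x => x ^ 2 + 2 * x - 2 * (1 + x) * Real.log (1 + x) with hf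
    have hmono : MonotoneOn f (Set.Ici (0 : ℝ)) := by
      apply monotoneOn_of_deriv_nonneg (convex_Ici _)
      · apply ContinuousOn.sub (by fun_prop)
        exact ContinuousOn.mul (by fun_prop)
          (contOn_aux _ (fun x hx => by have : (0:ℝ) ≤ x := hx; linarith))
      · intro y hy
        rw [interior_Ici] at hy
        have hy1 : 0 < 1 + y := by have : (0:ℝ) < y := hy; linarith
        exact (hasDerivAt_aux2 hy1).differentiableAt.differentiableWithinAt
      · intro y hy
        rw [interior_Ici] at hy
        have hy0 : (0 : ℝ) < y := hy
        have hy1 : 0 < 1 + y := by linarith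
        rw [(hasDerivAt_aux2 hy1).deriv]
        have := Real.log_le_sub_one_of_pos hy1
        linarith
    have h0 : (0 : ℝ) ∈ Set.Ici (0 : ℝ) := Set.mem_Ici.mpr le_rfl
    have hxm : x ∈ Set.Ici (0 : ℝ) := hx
    have h := hmono h0 hxm hx
    simp only [hf] at h
    norm_num at h
    linarith
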